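/- Let * be a continuous t-norm, p ∈ [0,∞), a ∈ [0,1], and let ξ be a distance distribution. Then ξ ≤ κ_{p,a} pointwise if and only if there exists a distance distribution ψ with κ_{p,a} ⊗ ψ = ξ. In other words, the distance distributions that are divisible by the one-step function κ_{p,a} are exactly those below κ_{p,a}. -/

import Mathlib

open unitInterval
open scoped ENNReal

noncomputable section

instance : Fact ((0:ℝ) ≤ 1) := ⟨zero_le_one⟩

/-- A distance distribution: a map `φ : [0,∞] → [0,1]` with `φ t = ⨆ s < t, φ s`. -/
def DistDistr (φ : ℝ≥0∞ → I) : Prop :=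
  ∀ t, φ t = ⨆ (s : ℝ≥0∞) (_ : s < t), φ s

/-- The one-step function `κ_{p,a}`. -/
def kappa (p : ℝ≥0∞) (a : I) : ℝ≥0∞ → I :=
  fun t => if t ≤ p then 0 else a

/-- A continuous t-norm on `[0,1]`. -/
structure ContinuousTNorm where
  mul : I → I → I
  continuous' : Continuous fun p : I × I => mul p.1 p.2
  comm : ∀ a b, mul a b = mul b a
  assoc : ∀ a b c, mul (mul a b) c = mul a (mul b c)
  mono : ∀ a, Monotone (mul a)
  mul_one : ∀ a, mul a 1 = a

/-- The residual `a →* b` of a continuous t-norm. -/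
def ContinuousTNorm.residual (T : ContinuousTNorm) (a b : I) : I :=
  sSup {c | T.mul a c ≤ b}

/-- Convolution of maps `[0,∞] → [0,1]` w.r.t. a continuous t-norm. -/
def conv (T : ContinuousTNorm) (φ ψ : ℝ≥0∞ → I) : ℝ≥0∞ → I :=
  fun t => ⨆ (r : ℝ≥0∞) (s : ℝ≥0∞) (_ : r + s = t), T.mul (φ r) (ψ s)

/-- `φ⁻ t = ⨆ s < t, φ s`. -/
def lower (φ : ℝ≥0∞ → I) : ℝ≥0∞ → I :=
  fun t => ⨆ (s : ℝ≥0∞) (_ : s < t), φ s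

namespace ContinuousTNorm
variable (T : ContinuousTNorm)

lemma cont_left (a : I) : Continuous (T.mul a) :=
  T.continuous'.comp (Continuous.prodMk_right a)

lemma mul_zero' (a : I) : T.mul a 0 = 0 := by
  refine le_antisymm ?_ nonneg'
  calc T.mul a 0 = T.mul 0 a := T.comm a 0
    _ ≤ T.mul 0 1 := T.mono 0 le_one'
    _ = 0 := T.mul_one 0

lemma mul_le_mul' {a b c d : I} (h1 : a ≤ c) (h2 : b ≤ d) : T.mul a b ≤ T.mul c d := by
  calc T.mul a b ≤ T.mul a d := T.mono a h2
    _ = T.mul d a := T.comm a d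
    _ ≤ T.mul d c := T.mono d h1
    _ = T.mul c d := T.comm d c

lemma exists_div {a b : I} (h : b ≤ a) : ∃ c, T.mul a c = b := by
  have hb : b ∈ Set.Icc (T.mul a 0) (T.mul a 1) := by
    rw [T.mul_zero', T.mul_one]; exact ⟨nonneg', h⟩
  exact intermediate_value_univ 0 1 (T.cont_left a) hb

lemma mul_iSup {ι : Sort*} (a : I) (g : ι → I) :
    T.mul a (⨆ i, g i) = ⨆ i, T.mul a (g i) :=
  Monotone.map_iSup_of_continuousAt ((T.cont_left a).continuousAt) (T.mono a) (T.mul_zero' a)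

end ContinuousTNorm

/-- a distance distribution `ξ` satisfies `ξ ≤ κ_{p,a}` iff it is
divisible by `κ_{p,a}`. -/
theorem stmt_12 (T : ContinuousTNorm) (p : ℝ≥0∞) (hp : p ≠ ∞) (a : I)
    (ξ : ℝ≥0∞ → I) (hξ : DistDistr ξ) :
    (∀ t, ξ t ≤ kappa p a t) ↔
      ∃ ψ : ℝ≥0∞ → I, DistDistr ψ ∧ conv T (kappa p a) ψ = ξ := by
  have hmono : Monotone ξ := by
    intro s t hst
    rcases eq_or_lt_of_le hst with rfl | h
    · exact le_rfl
    · calc ξ s ≤ ⨆ (u : ℝ≥0∞) (_ : u < t), ξ u := le_iSup₂_of_le s h le_rfl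
        _ = ξ t := (hξ t).symm
  constructor
  · intro h
    have hle_a : ∀ t, ξ t ≤ a := by
      intro t
      refine (h t).trans ?_
      unfold kappa
      split <;> [exact nonneg'; exact le_rfl]
    have hzero : ∀ t, t ≤ p → ξ t = 0 := by
      intro t ht
      refine le_antisymm ?_ nonneg'
      simpa [kappa, ht] using h t
    -- choose χ with a * χ s = ξ (p + s)
    have hch : ∀ s : ℝ≥0∞, ∃ c, T.mul a c = ξ (p + s) := fun s => T.exists_div (hle_a _)
    choose χ hχ using hch
    set ψ : ℝ≥0∞ → I := fun t => ⨆ (s : ℝ≥0∞) (_ : s < t), χ s with hψdef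
    have hψmono : Monotone ψ := fun s t hst =>
      iSup₂_le fun u hu => le_iSup₂_of_le u (hu.trans_le hst) le_rfl
    have hψd : DistDistr ψ := by
      intro t
      refine le_antisymm (iSup₂_le fun u hu => ?_) (iSup₂_le fun u hu => hψmono hu.le)
      obtain ⟨m, hm1, hm2⟩ := exists_between hu
      exact le_iSup₂_of_le m hm2 (le_iSup₂_of_le u hm1 le_rfl)
    -- key: a * ψ t = ⨆ s < t, ξ (p + s)
    have hkey : ∀ t, T.mul a (ψ t) = ⨆ (s : ℝ≥0∞) (_ : s < t), ξ (p + s) := by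
      intro t
      rw [hψdef]
      simp only [T.mul_iSup]
      exact iSup_congr fun s => iSup_congr fun _ => hχ s
    refine ⟨ψ, hψd, funext fun t => ?_⟩
    refine le_antisymm (iSup₂_le fun r s => iSup_le fun hrs => ?_) ?_
    · -- each term ≤ ξ t
      by_cases hr : r ≤ p
      · simp only [kappa, if_pos hr]
        calc T.mul 0 (ψ s) = T.mul (ψ s) 0 := T.comm 0 (ψ s)
          _ = 0 := T.mul_zero' _
          _ ≤ ξ t := nonneg'
      · simp only [kappa, if_neg hr]
        rw [hkey]
        refine iSup₂_le fun u hu => hmono ?_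
        calc p + u ≤ p + s := add_le_add_right hu.le p
          _ ≤ r + s := add_le_add_left (not_le.mp hr).le s
          _ = t := hrs
    · by_cases ht : t ≤ p
      · calc ξ t ≤ 0 := (hzero t ht).le
          _ ≤ _ := nonneg'
      · rw [hξ t]
        refine iSup₂_le fun v hv => ?_
        by_cases hvp : v ≤ p
        · calc ξ v ≤ 0 := (hzero v hvp).le
            _ ≤ _ := nonneg'
        · push_neg at hvp
          obtain ⟨m, hm1, hm2⟩ := exists_between hv
          -- s := m - p, r := t - s
          set s : ℝ≥0∞ := m - p with hs
          have hps : p + s = m := add_tsub_cancel_of_le (hvp.le.trans hm1.le)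
          have hst : s ≤ t := tsub_le_self.trans hm2.le
          have hrst : (t - s) + s = t := tsub_add_cancel_of_le hst
          have hrp : ¬ (t - s ≤ p) := by
            rw [not_le, lt_tsub_iff_right, hps]  -- p < t - s ↔ p + s < t
            exact hm2
          refine le_trans ?_ (le_iSup₂_of_le (t - s) s (le_iSup_of_le hrst le_rfl))
          simp only [kappa, if_neg hrp]
          rw [hkey]
          have huv : v - p < s := by
            rw [← ENNReal.add_lt_add_iff_left hp, hps, add_tsub_cancel_of_le hvp.le]
            exact hm1
          refine le_trans ?_ (le_iSup₂_of_le (v - p) huv le_rfl)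
          rw [add_tsub_cancel_of_le hvp.le]
  · rintro ⟨ψ, hψ, hconv⟩ t
    rw [← hconv]
    refine iSup₂_le fun r s => iSup_le fun hrs => ?_
    by_cases ht : t ≤ p
    · have hr : r ≤ p := le_trans (le_trans le_self_add hrs.le) ht
      simp only [kappa, if_pos hr, if_pos ht]
      exact le_of_eq ((T.comm 0 (ψ s)).trans (T.mul_zero' _))
    · simp only [kappa, if_neg ht]
      have h1 : kappa p a r ≤ a := by
        unfold kappa; split <;> [exact nonneg'; exact le_rfl]
      calc T.mul (kappa p a r) (ψ s) ≤ T.mul a 1 := T.mul_le_mul' h1 le_one'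
        _ = a := T.mul_one a
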